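/- arXiv:2211.09506 — 2 statements merged into one kernel-verified Lean document; each statement's English description precedes it below -/
import Mathlib

section
/- For every natural number n ≥ 2 and every quaternion q, the Fueter operator applied to the function q ↦ q̄^n satisfies D(q̄^n) = (2n+2) q̄^{n-1} + 2 q ∑_{k=0}^{n-2} q̄^{n-k-2} q^k. -/
open scoped Quaternion

def e1 : ℍ[ℝ] := ⟨0,1,0,0⟩
def e2 : ℍ[ℝ] := ⟨0,0,1,0⟩
def e3 : ℍ[ℝ] := ⟨0,0,0,1⟩

/-- The Fueter operator `D = ∂_{q0} + e1 ∂_{q1} + e2 ∂_{q2} + e3 ∂_{q3}`. -/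
noncomputable def fueterD (f : ℍ[ℝ] → ℍ[ℝ]) (q : ℍ[ℝ]) : ℍ[ℝ] :=
  fderiv ℝ f q 1 + e1 * fderiv ℝ f q e1 + e2 * fderiv ℝ f q e2 + e3 * fderiv ℝ f q e3

noncomputable def powDeriv (n : ℕ) (x : ℍ[ℝ]) : ℍ[ℝ] →L[ℝ] ℍ[ℝ] :=
  ∑ i ∈ Finset.range n, ContinuousLinearMap.mulLeftRight ℝ ℍ[ℝ] (x ^ i) (x ^ (n - 1 - i))

lemma powDeriv_apply (n : ℕ) (x v : ℍ[ℝ]) :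
    powDeriv n x v = ∑ i ∈ Finset.range n, x ^ i * v * x ^ (n - 1 - i) := by
  simp [powDeriv]

lemma hasFDerivAt_pow_quat (n : ℕ) (x : ℍ[ℝ]) :
    HasFDerivAt (fun y : ℍ[ℝ] => y ^ n) (powDeriv n x) x := by
  induction n with
  | zero =>
      simpa [powDeriv] using (hasFDerivAt_const (1 : ℍ[ℝ]) x)
  | succ n ih =>
      have h : HasFDerivAt (fun y : ℍ[ℝ] => y ^ (n + 1))
          (x ^ n • ContinuousLinearMap.id ℝ ℍ[ℝ] + (powDeriv n x).smulRight x) x := by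
        rw [show (fun y : ℍ[ℝ] => y ^ (n+1)) = (fun y => y^n) * id from funext fun y => pow_succ y n]
        exact (ih.mul' (hasFDerivAt_id x)).congr_fderiv (by ext v : 1; simp)
      have heq : (x ^ n • ContinuousLinearMap.id ℝ ℍ[ℝ] +
          (powDeriv n x).smulRight x) = powDeriv (n + 1) x :=
        ContinuousLinearMap.ext fun v => by
          simp only [ContinuousLinearMap.add_apply, ContinuousLinearMap.smul_apply,
            ContinuousLinearMap.id_apply, ContinuousLinearMap.smulRight_apply,
            powDeriv_apply, smul_eq_mul, Finset.sum_mul, Finset.sum_range_succ,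
            Nat.add_sub_cancel, Nat.sub_self, pow_zero, mul_one]
          rw [add_comm]
          congr 1
          refine Finset.sum_congr rfl fun i hi => ?_
          rw [Finset.mem_range] at hi
          rw [show n - i = n - 1 - i + 1 by omega, pow_succ, ← mul_assoc]
      rwa [heq] at h

noncomputable def starCLM : ℍ[ℝ] →L[ℝ] ℍ[ℝ] where
  toFun := star
  map_add' := star_add
  map_smul' := fun r x => by
    ext <;> simp
  cont := continuous_star

@[simp] lemma starCLM_apply (v : ℍ[ℝ]) : starCLM v = star v := rfl

lemma hasFDerivAt_conj_pow (n : ℕ) (q : ℍ[ℝ]) :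
    HasFDerivAt (fun x : ℍ[ℝ] => (star x) ^ n)
      ((powDeriv n (star q)).comp starCLM) q :=
  (hasFDerivAt_pow_quat n (star q)).comp q starCLM.hasFDerivAt

@[simp] lemma e1_re : e1.re = 0 := rfl
@[simp] lemma e1_imI : e1.imI = 1 := rfl
@[simp] lemma e1_imJ : e1.imJ = 0 := rfl
@[simp] lemma e1_imK : e1.imK = 0 := rfl
@[simp] lemma e2_re : e2.re = 0 := rfl
@[simp] lemma e2_imI : e2.imI = 0 := rfl
@[simp] lemma e2_imJ : e2.imJ = 1 := rfl
@[simp] lemma e2_imK : e2.imK = 0 := rfl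
@[simp] lemma e3_re : e3.re = 0 := rfl
@[simp] lemma e3_imI : e3.imI = 0 := rfl
@[simp] lemma e3_imJ : e3.imJ = 0 := rfl
@[simp] lemma e3_imK : e3.imK = 1 := rfl

lemma star_e1 : star e1 = -e1 := by ext <;> simp
lemma star_e2 : star e2 = -e2 := by ext <;> simp
lemma star_e3 : star e3 = -e3 := by ext <;> simp

lemma key (a b : ℍ[ℝ]) :
    a * 1 * b + e1 * (a * (-e1) * b) + e2 * (a * (-e2) * b) + e3 * (a * (-e3) * b) =
      2 * (a * b) + 2 * (star a * b) := by
  rw [two_mul, two_mul]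
  ext <;>
    simp [Quaternion.re_mul, Quaternion.imI_mul, Quaternion.imJ_mul,
      Quaternion.imK_mul] <;> ring

lemma comm_star (q : ℍ[ℝ]) : star q * q = q * star q := by
  ext <;> simp [Quaternion.re_mul, Quaternion.imI_mul, Quaternion.imJ_mul,
    Quaternion.imK_mul] <;> ring

/-- For `n ≥ 2` and every quaternion `q`,
`D(q̄^n) = (2n+2) q̄^{n-1} + 2 q ∑_{k=0}^{n-2} q̄^{n-k-2} q^k`. -/
theorem fueterD_conj_pow (n : ℕ) (hn : 2 ≤ n) (q : ℍ[ℝ]) :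
    fueterD (fun x => (star x) ^ n) q =
      ((2 * n + 2 : ℕ) : ℍ[ℝ]) * (star q) ^ (n - 1) +
        2 * q * ∑ k ∈ Finset.range (n - 1), (star q) ^ (n - k - 2) * q ^ k := by
  obtain ⟨m, rfl⟩ : ∃ m, n = m + 2 := ⟨n - 2, by omega⟩
  have hD := (hasFDerivAt_conj_pow (m + 2) q).fderiv
  have happ : ∀ v : ℍ[ℝ], fderiv ℝ (fun x : ℍ[ℝ] => (star x) ^ (m + 2)) q v =
      ∑ i ∈ Finset.range (m + 2),
        (star q) ^ i * (star v) * (star q) ^ (m + 1 - i) := by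
    intro v
    rw [hD]
    simp [powDeriv_apply]
  have hcomm : Commute q (star q) := comm_star q |>.symm
  rw [fueterD, happ, happ, happ, happ, star_one, star_e1, star_e2, star_e3,
    Finset.mul_sum, Finset.mul_sum, Finset.mul_sum,
    ← Finset.sum_add_distrib, ← Finset.sum_add_distrib, ← Finset.sum_add_distrib]
  have hterm : ∀ i ∈ Finset.range (m + 2),
      (star q) ^ i * 1 * (star q) ^ (m + 1 - i) +
        e1 * ((star q) ^ i * (-e1) * (star q) ^ (m + 1 - i)) +
        e2 * ((star q) ^ i * (-e2) * (star q) ^ (m + 1 - i)) +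
        e3 * ((star q) ^ i * (-e3) * (star q) ^ (m + 1 - i)) =
      2 * (star q) ^ (m + 1) + 2 * (q ^ i * (star q) ^ (m + 1 - i)) := by
    intro i hi
    rw [Finset.mem_range] at hi
    rw [key]
    congr 1
    · rw [← pow_add, show i + (m + 1 - i) = m + 1 by omega]
    · rw [star_pow, star_star]
  rw [Finset.sum_congr rfl hterm, Finset.sum_add_distrib, Finset.sum_const,
    Finset.card_range, Finset.sum_range_succ']
  simp only [pow_zero, one_mul, Nat.sub_zero]
  have hstep : ∀ k, 2 * (q ^ (k + 1) * (star q) ^ (m + 1 - (k + 1))) =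
      2 * q * ((star q) ^ (m + 2 - k - 2) * q ^ k) := by
    intro k
    have : m + 1 - (k + 1) = m + 2 - k - 2 := by omega
    rw [this, pow_succ', mul_assoc q, (hcomm.pow_pow k (m + 2 - k - 2)).eq, ← mul_assoc]
  rw [Finset.sum_congr rfl fun k _ => hstep k, ← Finset.mul_sum,
    show m + 2 - 1 = m + 1 from rfl]
  push_cast [nsmul_eq_mul]
  noncomm_ring
end

section
/- Let p, s be quaternions with p ∉ [s]. With F_L(s,p) = -4(s - p̄) Q_{c,s}(p)^{-2}, Q_{c,s}(p)^{-1} = (s² - 2Re(p)s + |p|²)^{-1}, and the P₂-kernel P₂^L(s,p) = -F_L(s,p)·s + p0·F_L(s,p) (where p0 = Re(p)), one has the identity 4 Q_{c,s}(p)^{-1} = P₂^L(s,p) + p̲ · F_L(s,p), where p̲ = p - p0 is the imaginary part of p. -/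
open scoped Quaternion

/-- The 2-sphere `[s] = {x : Re x = Re s, ‖Im x‖ = ‖Im s‖}` associated to a quaternion. -/
def qSphere (s : ℍ[ℝ]) : Set ℍ[ℝ] := {x | x.re = s.re ∧ ‖x.im‖ = ‖s.im‖}

/-- `Q_{c,s}(p) = s² - 2 Re(p) s + |p|²`. -/
noncomputable def Qc (s p : ℍ[ℝ]) : ℍ[ℝ] :=
  s ^ 2 - 2 * ((p.re : ℝ) : ℍ[ℝ]) * s + ((Quaternion.normSq p : ℝ) : ℍ[ℝ])

/-- The left `F`-kernel `F_L(s,p) = -4 (s - p̄) Q_{c,s}(p)^{-2}`. -/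
noncomputable def FL (s p : ℍ[ℝ]) : ℍ[ℝ] := -4 * (s - star p) * ((Qc s p)⁻¹) ^ 2

/-- The `P₂`-kernel `P₂^L(s,p) = -F_L(s,p)·s + p0·F_L(s,p)` with `p0 = Re p`. -/
noncomputable def P2L (s p : ℍ[ℝ]) : ℍ[ℝ] :=
  -(FL s p * s) + ((p.re : ℝ) : ℍ[ℝ]) * FL s p

set_option maxHeartbeats 1000000 in
/-- If `p ∉ [s]` then `Q_{c,s}(p) ≠ 0`. -/
theorem Qc_ne_zero_aux (s p : ℍ[ℝ]) (h : p ∉ qSphere s) : Qc s p ≠ 0 := by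
  simp only [qSphere, Set.mem_setOf_eq] at h
  intro hQ
  unfold Qc at hQ
  have h2c : ((2:ℍ[ℝ])) = ((2:ℝ) : ℍ[ℝ]) := by norm_cast
  rw [h2c, ← Quaternion.coe_mul] at hQ
  rw [Quaternion.ext_iff] at hQ
  simp only [pow_two, Quaternion.re_mul, Quaternion.imI_mul, Quaternion.imJ_mul,
    Quaternion.imK_mul, Quaternion.re_sub, Quaternion.imI_sub, Quaternion.imJ_sub,
    Quaternion.imK_sub, Quaternion.re_add, Quaternion.imI_add, Quaternion.imJ_add,
    Quaternion.imK_add, Quaternion.re_coe, Quaternion.imI_coe, Quaternion.imJ_coe,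
    Quaternion.imK_coe, Quaternion.re_zero, Quaternion.imI_zero, Quaternion.imJ_zero,
    Quaternion.imK_zero, mul_zero, zero_mul, sub_zero, add_zero, zero_sub, zero_add] at hQ
  obtain ⟨h1, h2, h3, h4⟩ := hQ
  have hn : Quaternion.normSq p = p.re ^ 2 + p.imI ^ 2 + p.imJ ^ 2 + p.imK ^ 2 :=
    Quaternion.normSq_def' p
  have hge : Quaternion.normSq p ≥ p.re ^ 2 := by
    nlinarith [sq_nonneg p.imI, sq_nonneg p.imJ, sq_nonneg p.imK]
  have hi : s.imI * (s.re - p.re) = 0 := by linear_combination h2 / 2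
  have hj : s.imJ * (s.re - p.re) = 0 := by linear_combination h3 / 2
  have hk : s.imK * (s.re - p.re) = 0 := by linear_combination h4 / 2
  have hi2 : s.imI ^ 2 * (s.re - p.re) ^ 2 = 0 := by rw [← mul_pow, hi]; ring
  have hj2 : s.imJ ^ 2 * (s.re - p.re) ^ 2 = 0 := by rw [← mul_pow, hj]; ring
  have hk2 : s.imK ^ 2 * (s.re - p.re) ^ 2 = 0 := by rw [← mul_pow, hk]; ring
  have hS' : (s.re - p.re) ^ 2 =
      (s.imI ^ 2 + s.imJ ^ 2 + s.imK ^ 2) - Quaternion.normSq p + p.re ^ 2 := by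
    linear_combination h1
  have key : (s.re - p.re) ^ 2 * (s.re - p.re) ^ 2 =
      ((s.imI ^ 2 + s.imJ ^ 2 + s.imK ^ 2) - Quaternion.normSq p + p.re ^ 2) *
        (s.re - p.re) ^ 2 := by
    rw [← hS']
  have ht2 : (s.re - p.re) ^ 2 = 0 := by
    nlinarith [key, hi2, hj2, hk2, hge, sq_nonneg (s.re - p.re)]
  have hw : s.re = p.re := by
    have := pow_eq_zero_iff (n := 2) (by norm_num) |>.mp ht2
    linarith [this]
  have hS : s.imI ^ 2 + s.imJ ^ 2 + s.imK ^ 2 = Quaternion.normSq p - p.re ^ 2 := by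
    rw [hw] at h1; linear_combination -h1
  apply h
  refine ⟨hw.symm, ?_⟩
  have h5 : ‖p.im‖ * ‖p.im‖ = ‖s.im‖ * ‖s.im‖ := by
    rw [← Quaternion.normSq_eq_norm_mul_self, ← Quaternion.normSq_eq_norm_mul_self,
      Quaternion.normSq_def', Quaternion.normSq_def']
    simp only [Quaternion.re_im, Quaternion.imI_im, Quaternion.imJ_im, Quaternion.imK_im]
    linear_combination -hS - hn
  exact (mul_self_inj (norm_nonneg _) (norm_nonneg _)).mp h5

/-- For `p ∉ [s]`: `4 Q_{c,s}(p)⁻¹ = P₂^L(s,p) + p̲·F_L(s,p)`,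
where `p̲ = p - Re p` is the imaginary part of `p`. -/
theorem four_Qc_inv_eq_P2L_add_im_mul_FL (s p : ℍ[ℝ]) (h : p ∉ qSphere s) :
    4 * (Qc s p)⁻¹ = P2L s p + (p - ((p.re : ℝ) : ℍ[ℝ])) * FL s p := by
  have hQ0 : Qc s p ≠ 0 := Qc_ne_zero_aux s p h
  have hc : Commute s (Qc s p) := by
    unfold Qc
    refine (((Commute.refl s).pow_right 2).sub_right ?_).add_right
      ((Quaternion.coe_commute _ s).symm)
    exact ((Commute.ofNat_right s 2).mul_right
      ((Quaternion.coe_commute p.re s).symm)).mul_right (Commute.refl s)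
  have hA : Commute s ((Qc s p)⁻¹) := hc.inv_right₀
  have hA2 : ((Qc s p)⁻¹) ^ 2 * s = s * ((Qc s p)⁻¹) ^ 2 := ((hA.pow_right 2).eq).symm
  have hkey : (s - star p) * s - p * (s - star p) = Qc s p := by
    have h1 : star p + p = 2 * ((p.re : ℝ) : ℍ[ℝ]) := Quaternion.star_add_self p
    have h2 : p * star p = ((Quaternion.normSq p : ℝ) : ℍ[ℝ]) := Quaternion.self_mul_star p
    calc (s - star p) * s - p * (s - star p)
        = s ^ 2 - (star p + p) * s + p * star p := by noncomm_ring
      _ = Qc s p := by rw [h1, h2]; unfold Qc; rw [mul_assoc]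
  have expand : P2L s p + (p - ((p.re : ℝ) : ℍ[ℝ])) * FL s p =
      4 * (((s - star p) * s - p * (s - star p)) * ((Qc s p)⁻¹) ^ 2) := by
    unfold P2L FL
    rw [mul_assoc (-4 * (s - star p)) (((Qc s p)⁻¹) ^ 2) s, hA2]
    noncomm_ring
  have hQA : Qc s p * ((Qc s p)⁻¹) ^ 2 = (Qc s p)⁻¹ := by
    rw [sq, ← mul_assoc, mul_inv_cancel₀ hQ0, one_mul]
  rw [expand, hkey, hQA]
end
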